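/- Let ∇ ⊂ ℝ⁴ be defined by z,w ≥ 0, 1-z-w ≥ 0, x,y ≥ 0, z+w-x ≥ 0, x+y-w ≥ 0, 1-x-y ≥ 0. For every positive integer n, the number of lattice points in n∇ equals C(n+4,4) + 2·C(n+3,4) + C(n+2,4) = (4n⁴ + 24n³ + 56n² + 60n + 24)/24. -/

import Mathlib

open Pointwise Finset

def nabla : Set (ℝ × ℝ × ℝ × ℝ) :=
  {p : ℝ × ℝ × ℝ × ℝ |
    0 ≤ p.2.2.1 ∧
    0 ≤ p.2.2.2 ∧
    0 ≤ 1 - p.2.2.1 - p.2.2.2 ∧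
    0 ≤ p.1 ∧
    0 ≤ p.2.1 ∧
    0 ≤ p.2.2.1 + p.2.2.2 - p.1 ∧
    0 ≤ p.1 + p.2.1 - p.2.2.2 ∧
    0 ≤ 1 - p.1 - p.2.1}

-- binomial identities over ℚ
lemma cq2 (m : ℕ) : ((m+1).choose 2 : ℚ) * 2 = m * (m+1) := by
  induction m with
  | zero => norm_num
  | succ k ih =>
    have e : (k+2).choose 2 = (k+1).choose 1 + (k+1).choose 2 := Nat.choose_succ_succ (k+1) 1
    rw [show k+1+1 = k+2 from rfl, e, Nat.choose_one_right]
    push_cast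
    linear_combination ih

lemma cq3 (m : ℕ) : ((m+2).choose 3 : ℚ) * 6 = m * (m+1) * (m+2) := by
  induction m with
  | zero => norm_num [Nat.choose]
  | succ k ih =>
    have e : (k+3).choose 3 = (k+2).choose 2 + (k+2).choose 3 := Nat.choose_succ_succ (k+2) 2
    rw [show k+1+2 = k+3 from rfl, e]
    push_cast
    have h2 := cq2 (k+1)
    push_cast at h2
    linear_combination ih + 3 * h2

lemma cq4 (m : ℕ) : ((m+2).choose 4 : ℚ) * 24 = ((m:ℚ) - 1) * m * (m+1) * (m+2) := by
  induction m with
  | zero => norm_num [Nat.choose]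
  | succ k ih =>
    have e : (k+3).choose 4 = (k+2).choose 3 + (k+2).choose 4 := Nat.choose_succ_succ (k+2) 3
    rw [show k+1+2 = k+3 from rfl, e]
    push_cast
    linear_combination ih + 4 * cq3 k

lemma chooseSum (n : ℕ) :
    ((n+4).choose 4 : ℚ) + 2 * ((n+3).choose 4 : ℚ) + ((n+2).choose 4 : ℚ)
      = (4*(n:ℚ)^4 + 24*(n:ℚ)^3 + 56*(n:ℚ)^2 + 60*(n:ℚ)^1 + 24) / 24 := by
  have e1 := cq4 (n+2)
  have e2 := cq4 (n+1)
  have e3 := cq4 n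
  rw [show n+2+2 = n+4 by ring] at e1
  rw [show n+1+2 = n+3 by ring] at e2
  rw [eq_div_iff (by norm_num : (24:ℚ) ≠ 0)]
  push_cast at e1 e2 ⊢
  linear_combination e1 + 2 * e2 + e3

-- cubic power sum
lemma cubic_sum (a b c d : ℚ) (n : ℕ) :
    ∑ x ∈ Icc 0 n, (a*(x:ℚ)^3 + b*(x:ℚ)^2 + c*(x:ℚ) + d)
      = a*(n:ℚ)^2*((n:ℚ)+1)^2/4 + b*(n:ℚ)*((n:ℚ)+1)*(2*(n:ℚ)+1)/6
        + c*(n:ℚ)*((n:ℚ)+1)/2 + d*((n:ℚ)+1) := by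
  induction n with
  | zero => simp
  | succ k ih =>
    rw [Finset.sum_Icc_succ_top (Nat.zero_le _), ih]
    push_cast
    ring

lemma mid_sum (N X : ℚ) (m : ℕ) :
    6 * ∑ y ∈ Icc 0 m, (2*(X+(y:ℚ)+1)*(N+1-X) - (y:ℚ)*((y:ℚ)+1))
      = 6*(N+1-X)*((m:ℚ)+1)*(2*X+2+(m:ℚ)) - 2*(m:ℚ)*((m:ℚ)+1)*((m:ℚ)+2) := by
  induction m with
  | zero => simp; ring
  | succ k ih =>
    rw [Finset.sum_Icc_succ_top (Nat.zero_le _)]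
    push_cast
    push_cast at ih
    linear_combination ih

lemma innerSumQ (n x : ℕ) (hx : x ≤ n) : ∀ y : ℕ, x + y ≤ n →
    2 * ∑ w ∈ Icc 0 (x+y), ((n - w + 1 - (x - w) : ℕ) : ℚ)
      = 2*((x:ℚ)+(y:ℚ)+1)*((n:ℚ)+1-(x:ℚ)) - (y:ℚ)*((y:ℚ)+1) := by
  intro y
  induction y with
  | zero =>
    intro _
    have hc : ∀ w ∈ Icc 0 (x+0), ((n - w + 1 - (x - w) : ℕ) : ℚ) = ((n + 1 - x : ℕ) : ℚ) := by
      intro w hw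
      rw [Finset.mem_Icc] at hw
      congr 1
      omega
    rw [Finset.sum_congr rfl hc, Finset.sum_const, Nat.card_Icc, Nat.cast_sub (by omega : x ≤ n + 1)]
    push_cast
    ring
  | succ k ih =>
    intro h
    rw [show x + (k+1) = (x+k)+1 from rfl, Finset.sum_Icc_succ_top (Nat.zero_le _)]
    have ht : ((n - (x+k+1) + 1 - (x - (x+k+1)) : ℕ) : ℚ) = (n:ℚ) - x - k := by
      rw [show (n - (x+k+1) + 1 - (x - (x+k+1)) : ℕ) = n - (x+k) by omega,
        Nat.cast_sub (by omega : x + k ≤ n)]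
      push_cast
      ring
    rw [ht]
    have IH := ih (by omega)
    push_cast
    push_cast at IH
    linear_combination IH

def Fset (n : ℕ) : Finset (Σ _ : ℕ, Σ _ : ℕ, Σ _ : ℕ, ℕ) :=
  (Icc 0 n).sigma fun x => (Icc 0 (n-x)).sigma fun y =>
    (Icc 0 (x+y)).sigma fun w => Icc (x-w) (n-w)

def emb : (Σ _ : ℕ, Σ _ : ℕ, Σ _ : ℕ, ℕ) ↪ ℤ × ℤ × ℤ × ℤ :=
  ⟨fun a => ((a.1 : ℤ), (a.2.1 : ℤ), (a.2.2.2 : ℤ), (a.2.2.1 : ℤ)), by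
    rintro ⟨x, y, w, z⟩ ⟨x', y', w', z'⟩ h
    simp only [Prod.mk.injEq, Nat.cast_inj] at h
    obtain ⟨h1, h2, h3, h4⟩ := h
    subst h1; subst h2; subst h3; subst h4; rfl⟩

lemma mem_dilate (n : ℕ) (hn : 0 < n) (a b c d : ℤ) :
    (((a:ℝ), (b:ℝ), (c:ℝ), (d:ℝ)) ∈ (n:ℝ) • nabla) ↔
      (0 ≤ c ∧ 0 ≤ d ∧ c + d ≤ n ∧ 0 ≤ a ∧ 0 ≤ b ∧ a ≤ c + d ∧ d ≤ a + b ∧ a + b ≤ n) := by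
  have hn' : (0:ℝ) < n := by exact_mod_cast hn
  constructor
  · rintro ⟨⟨q1, q2, q3, q4⟩, hq, heq⟩
    obtain ⟨h1, h2, h3, h4, h5, h6, h7, h8⟩ := hq
    simp only [Prod.smul_mk, smul_eq_mul, Prod.mk.injEq] at heq
    obtain ⟨e1, e2, e3, e4⟩ := heq
    refine ⟨?_, ?_, ?_, ?_, ?_, ?_, ?_, ?_⟩
    · have : (0:ℝ) ≤ (c:ℝ) := by nlinarith
      exact_mod_cast this
    · have : (0:ℝ) ≤ (d:ℝ) := by nlinarith
      exact_mod_cast this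
    · have : (c:ℝ) + d ≤ n := by nlinarith
      exact_mod_cast this
    · have : (0:ℝ) ≤ (a:ℝ) := by nlinarith
      exact_mod_cast this
    · have : (0:ℝ) ≤ (b:ℝ) := by nlinarith
      exact_mod_cast this
    · have : (a:ℝ) ≤ (c:ℝ) + d := by nlinarith
      exact_mod_cast this
    · have : (d:ℝ) ≤ (a:ℝ) + b := by nlinarith
      exact_mod_cast this
    · have : (a:ℝ) + b ≤ n := by nlinarith
      exact_mod_cast this
  · rintro ⟨h1, h2, h3, h4, h5, h6, h7, h8⟩
    have r1 : (0:ℝ) ≤ (c:ℝ) := by exact_mod_cast h1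
    have r2 : (0:ℝ) ≤ (d:ℝ) := by exact_mod_cast h2
    have r3 : (c:ℝ) + d ≤ n := by exact_mod_cast h3
    have r4 : (0:ℝ) ≤ (a:ℝ) := by exact_mod_cast h4
    have r5 : (0:ℝ) ≤ (b:ℝ) := by exact_mod_cast h5
    have r6 : (a:ℝ) ≤ (c:ℝ) + d := by exact_mod_cast h6
    have r7 : (d:ℝ) ≤ (a:ℝ) + b := by exact_mod_cast h7
    have r8 : (a:ℝ) + b ≤ n := by exact_mod_cast h8
    have hne : (n:ℝ) ≠ 0 := ne_of_gt hn'
    refine ⟨((a:ℝ)/n, (b:ℝ)/n, (c:ℝ)/n, (d:ℝ)/n), ⟨?_, ?_, ?_, ?_, ?_, ?_, ?_, ?_⟩, ?_⟩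
    · exact div_nonneg r1 hn'.le
    · exact div_nonneg r2 hn'.le
    · have e : (1:ℝ) - (c:ℝ)/n - (d:ℝ)/n = ((n:ℝ) - c - d)/n := by
        field_simp
      rw [e]; exact div_nonneg (by linarith) hn'.le
    · exact div_nonneg r4 hn'.le
    · exact div_nonneg r5 hn'.le
    · have e : (c:ℝ)/n + (d:ℝ)/n - (a:ℝ)/n = ((c:ℝ) + d - a)/n := by
        field_simp
      rw [e]; exact div_nonneg (by linarith) hn'.le
    · have e : (a:ℝ)/n + (b:ℝ)/n - (d:ℝ)/n = ((a:ℝ) + b - d)/n := by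
        field_simp
      rw [e]; exact div_nonneg (by linarith) hn'.le
    · have e : (1:ℝ) - (a:ℝ)/n - (b:ℝ)/n = ((n:ℝ) - a - b)/n := by
        field_simp
      rw [e]; exact div_nonneg (by linarith) hn'.le
    · simp only [Prod.smul_mk, smul_eq_mul, Prod.mk.injEq]
      refine ⟨?_, ?_, ?_, ?_⟩ <;> field_simp

lemma hset (n : ℕ) (hn : 0 < n) :
    {v : ℤ × ℤ × ℤ × ℤ | (((v.1 : ℝ), (v.2.1 : ℝ), (v.2.2.1 : ℝ), (v.2.2.2 : ℝ)) : ℝ × ℝ × ℝ × ℝ) ∈ (n : ℝ) • nabla}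
      = ((Fset n).map emb : Finset (ℤ × ℤ × ℤ × ℤ)) := by
  ext ⟨a, b, c, d⟩
  simp only [Set.mem_setOf_eq, mem_dilate n hn a b c d, Finset.coe_map, Set.mem_image,
    Finset.mem_coe, Fset, Finset.mem_sigma, Finset.mem_Icc, emb, Function.Embedding.coeFn_mk]
  constructor
  · rintro ⟨h1, h2, h3, h4, h5, h6, h7, h8⟩
    refine ⟨⟨a.toNat, b.toNat, d.toNat, c.toNat⟩, ⟨⟨?_, ?_⟩, ⟨?_, ?_⟩, ⟨?_, ?_⟩, ?_, ?_⟩, ?_⟩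
    all_goals try dsimp only
    · omega
    · omega
    · omega
    · omega
    · omega
    · omega
    · omega
    · omega
    · show ((a.toNat : ℤ), (b.toNat : ℤ), (c.toNat : ℤ), (d.toNat : ℤ)) = (a, b, c, d)
      simp only [Prod.mk.injEq]
      refine ⟨?_, ?_, ?_, ?_⟩ <;> omega
  · rintro ⟨⟨x, y, w, z⟩, hmem, heq⟩
    change ((x:ℤ), (y:ℤ), (z:ℤ), (w:ℤ)) = (a, b, c, d) at heq
    simp only [Prod.mk.injEq] at heq hmem
    obtain ⟨e1, e2, e3, e4⟩ := heq
    obtain ⟨⟨_, hx⟩, ⟨_, hy⟩, ⟨_, hw⟩, hz1, hz2⟩ := hmem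
    refine ⟨?_, ?_, ?_, ?_, ?_, ?_, ?_, ?_⟩ <;> omega

lemma cardQ (n : ℕ) : ((Fset n).card : ℚ) * 24
    = 4*(n:ℚ)^4 + 24*(n:ℚ)^3 + 56*(n:ℚ)^2 + 60*(n:ℚ) + 24 := by
  have hcard : (Fset n).card
      = ∑ x ∈ Icc 0 n, ∑ y ∈ Icc 0 (n-x), ∑ w ∈ Icc 0 (x+y), (n - w + 1 - (x - w)) := by
    simp [Fset, Finset.card_sigma, Nat.card_Icc]
  rw [hcard]
  rw [Nat.cast_sum]
  simp only [Nat.cast_sum]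
  have key : ∀ x ∈ Icc 0 n,
      (12:ℚ) * ∑ y ∈ Icc 0 (n-x), ∑ w ∈ Icc 0 (x+y), ((n - w + 1 - (x - w) : ℕ) : ℚ)
        = 8*(x:ℚ)^3 + (-(6:ℚ)-12*(n:ℚ))*(x:ℚ)^2 + (-(14:ℚ)-12*(n:ℚ))*(x:ℚ)
          + (4*(n:ℚ)^3+18*(n:ℚ)^2+26*(n:ℚ)+12) := by
    intro x hx
    rw [Finset.mem_Icc] at hx
    have hx' : x ≤ n := hx.2
    have step1 : ∀ y ∈ Icc 0 (n-x),
        (2:ℚ) * ∑ w ∈ Icc 0 (x+y), ((n - w + 1 - (x - w) : ℕ) : ℚ)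
          = 2*((x:ℚ)+(y:ℚ)+1)*((n:ℚ)+1-(x:ℚ)) - (y:ℚ)*((y:ℚ)+1) := by
      intro y hy
      rw [Finset.mem_Icc] at hy
      exact innerSumQ n x hx' y (by omega)
    calc (12:ℚ) * ∑ y ∈ Icc 0 (n-x), ∑ w ∈ Icc 0 (x+y), ((n - w + 1 - (x - w) : ℕ) : ℚ)
        = 6 * ∑ y ∈ Icc 0 (n-x), (2 * ∑ w ∈ Icc 0 (x+y), ((n - w + 1 - (x - w) : ℕ) : ℚ)) := by
          rw [Finset.mul_sum, Finset.mul_sum]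
          exact Finset.sum_congr rfl fun y _ => by ring
      _ = 6 * ∑ y ∈ Icc 0 (n-x), (2*((x:ℚ)+(y:ℚ)+1)*((n:ℚ)+1-(x:ℚ)) - (y:ℚ)*((y:ℚ)+1)) := by
          rw [Finset.sum_congr rfl step1]
      _ = 6*((n:ℚ)+1-(x:ℚ))*((↑(n-x):ℚ)+1)*(2*(x:ℚ)+2+(↑(n-x):ℚ))
            - 2*(↑(n-x):ℚ)*((↑(n-x):ℚ)+1)*((↑(n-x):ℚ)+2) := mid_sum (n:ℚ) (x:ℚ) (n-x)
      _ = _ := by rw [Nat.cast_sub hx']; ring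
  calc (∑ x ∈ Icc 0 n, ∑ y ∈ Icc 0 (n-x), ∑ w ∈ Icc 0 (x+y), ((n - w + 1 - (x - w) : ℕ) : ℚ)) * 24
      = 2 * ∑ x ∈ Icc 0 n,
          ((12:ℚ) * ∑ y ∈ Icc 0 (n-x), ∑ w ∈ Icc 0 (x+y), ((n - w + 1 - (x - w) : ℕ) : ℚ)) := by
        rw [Finset.sum_mul, Finset.mul_sum]
        exact Finset.sum_congr rfl fun x _ => by ring
    _ = 2 * ∑ x ∈ Icc 0 n,
          (8*(x:ℚ)^3 + (-(6:ℚ)-12*(n:ℚ))*(x:ℚ)^2 + (-(14:ℚ)-12*(n:ℚ))*(x:ℚ)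
            + (4*(n:ℚ)^3+18*(n:ℚ)^2+26*(n:ℚ)+12)) := by
        rw [Finset.sum_congr rfl key]
    _ = _ := by rw [cubic_sum]; ring

theorem stmt14 (n : ℕ) (hn : 0 < n) :
    {v : ℤ × ℤ × ℤ × ℤ | (((v.1 : ℝ), (v.2.1 : ℝ), (v.2.2.1 : ℝ), (v.2.2.2 : ℝ)) : ℝ × ℝ × ℝ × ℝ) ∈ (n : ℝ) • nabla}.ncard
        = Nat.choose (n + 4) 4 + 2 * Nat.choose (n + 3) 4 + Nat.choose (n + 2) 4 ∧
      ((Nat.choose (n + 4) 4 + 2 * Nat.choose (n + 3) 4 + Nat.choose (n + 2) 4 : ℚ))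
        = (4 * (n : ℚ) ^ 4 + 24 * (n : ℚ) ^ 3 + 56 * (n : ℚ) ^ 2 + 60 * (n : ℚ) ^ 1 + 24) / 24 := by
  constructor
  · rw [hset n hn, Set.ncard_coe_finset, Finset.card_map]
    have h1 := cardQ n
    have h2 := chooseSum n
    have key : ((Fset n).card : ℚ)
        = (((n+4).choose 4 + 2 * (n+3).choose 4 + (n+2).choose 4 : ℕ) : ℚ) := by
      push_cast
      linear_combination (1/24 : ℚ) * h1 - h2
    exact_mod_cast key
  · have h2 := chooseSum n
    push_cast at h2 ⊢
    linarith
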